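/- Let 𝒮 be an IP family of finite subsets of ℕ and let c : NU(𝒮) → Fin r. Then either (1) there is an IP family 𝒮' ⊆ 𝒮 such that c is constant on NU(𝒮'), or (2) there is a finite collection ℬ ⊆ NU(𝒮) and an IP family 𝒯 ⊆ 𝒮 − ℬ such that ℬ full-matches every element of NU(𝒯), i.e., for every T ∈ NU(𝒯) there is B ∈ ℬ disjoint from T with c(B) = c(T) = c(B ∪ T). -/

import Mathlib

/-- The set of nonempty unions of finitely many members of `𝒮`. -/
def NU (𝒮 : Set (Finset ℕ)) : Set (Finset ℕ) :=
  {T | T.Nonempty ∧ ∃ F : Finset (Finset ℕ), ↑F ⊆ 𝒮 ∧ T = F.sup id}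

/-- `𝒮` is an IP family: closed under finite unions and containing an infinite
pairwise disjoint subfamily. -/
def IsIP (𝒮 : Set (Finset ℕ)) : Prop :=
  (∀ A ∈ 𝒮, ∀ B ∈ 𝒮, A ∪ B ∈ 𝒮) ∧
    ∃ 𝒟 ⊆ 𝒮, 𝒟.Infinite ∧ 𝒟.Pairwise Disjoint

/-- `𝒮` generates an IP set: it contains infinitely many pairwise disjoint elements. -/
def GeneratesIP (𝒮 : Set (Finset ℕ)) : Prop :=
  ∃ 𝒟 ⊆ 𝒮, 𝒟.Infinite ∧ 𝒟.Pairwise Disjoint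

/-- `𝒮 − ℬ`: the members of `𝒮` disjoint from every member of `ℬ`. -/
def SMinus (𝒮 ℬ : Set (Finset ℕ)) : Set (Finset ℕ) :=
  {T ∈ 𝒮 | ∀ B ∈ ℬ, Disjoint T B}

/-- `𝒟` half-matches `B` with respect to the coloring `c`. -/
def HalfMatch {α : Type*} (c : Finset ℕ → α) (𝒟 : Set (Finset ℕ)) (B : Finset ℕ) : Prop :=
  ∃ D ∈ 𝒟, Disjoint D B ∧ c B = c (D ∪ B)

/-- `𝒟` full-matches `B` with respect to the coloring `c`. -/
def FullMatch {α : Type*} (c : Finset ℕ → α) (𝒟 : Set (Finset ℕ)) (B : Finset ℕ) : Prop :=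
  ∃ D ∈ 𝒟, Disjoint D B ∧ c D = c B ∧ c B = c (D ∪ B)

/- ### Auxiliary material -/

/-- Binary encoding of a finite set of naturals. -/
private def ee (s : Finset ℕ) : ℕ := ∑ i ∈ s, 2 ^ i

private lemma decode_ee (s : Finset ℕ) : (ee s).bitIndices.toFinset = s := by
  have hsort : List.SortedLT (Finset.sort s (· ≤ ·)) := Finset.sortedLT_sort s
  have h1 : ee s = (List.map (fun i => 2 ^ i) (Finset.sort s (· ≤ ·))).sum := by
    conv_lhs => rw [ee, ← Finset.sort_toFinset s (· ≤ ·)]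
    exact List.sum_toFinset (fun i => 2 ^ i) (Finset.sort_nodup s _)
  rw [h1, Nat.bitIndices_twoPowsum hsort, Finset.sort_toFinset]

private lemma tail_drop' (k : ℕ) (s : Stream' ℕ) :
    (Stream'.drop k s).tail = Stream'.drop (k + 1) s := by
  rw [Stream'.tail_drop, ← Stream'.drop_succ]

/-- Every element of `FS (2^·)` (even of its tails) is a sum of distinct powers of two. -/
private lemma fs_char (st : Stream' ℕ) (x : ℕ) (h : x ∈ Hindman.FS st) :
    ∀ k : ℕ, st = Stream'.drop k (fun n => 2 ^ n) → ∃ u : Finset ℕ,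
      u.Nonempty ∧ (∀ p ∈ u, k ≤ p) ∧ x = ee u := by
  induction h with
  | head' s =>
      intro k hk
      refine ⟨{k}, Finset.singleton_nonempty k, by simp, ?_⟩
      subst hk
      simp [ee, Stream'.head_drop]
      exact Stream'.head_drop _ k
  | tail' s m hm ih =>
      intro k hk
      obtain ⟨u, hne, hbd, rfl⟩ := ih (k + 1) (by rw [hk]; exact tail_drop' k _)
      exact ⟨u, hne, fun p hp => le_trans (Nat.le_succ k) (hbd p hp), rfl⟩
  | cons' s m hm ih =>
      intro k hk
      obtain ⟨u, hne, hbd, rfl⟩ := ih (k + 1) (by rw [hk]; exact tail_drop' k _)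
      have hknot : k ∉ u := fun hku => by have := hbd k hku; omega
      refine ⟨insert k u, Finset.insert_nonempty _ _, ?_, ?_⟩
      · intro p hp
        rcases Finset.mem_insert.1 hp with rfl | hp
        · exact le_refl _
        · exact le_trans (Nat.le_succ k) (hbd p hp)
      · have hhead : s.head = 2 ^ k := by
          subst hk; exact Stream'.head_drop _ k
        rw [hhead]
        simp only [ee]
        rw [Finset.sum_insert hknot]

private lemma two_pow_sum_lt (N : ℕ) : ∑ i ∈ Finset.range N, 2 ^ i < 2 ^ N := by
  induction N with
  | zero => simp
  | succ n ih =>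
      rw [Finset.sum_range_succ, pow_succ]
      omega

/-- If `2^N` divides a sum of distinct powers of two, then all exponents are `≥ N`. -/
private lemma dvd_pow_two_bound {u : Finset ℕ} {N : ℕ} (h : 2 ^ N ∣ ee u) :
    ∀ p ∈ u, N ≤ p := by
  classical
  have hsplit := Finset.sum_filter_add_sum_filter_not u (fun i => i < N) (fun i => 2 ^ i)
  have hdvd2 : 2 ^ N ∣ ∑ i ∈ u.filter (fun i => ¬ i < N), 2 ^ i :=
    Finset.dvd_sum fun i hi =>
      pow_dvd_pow 2 (by simpa using (Finset.mem_filter.1 hi).2)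
  have hdvd1 : 2 ^ N ∣ ∑ i ∈ u.filter (fun i => i < N), 2 ^ i := by
    have heq : ∑ i ∈ u.filter (fun i => i < N), 2 ^ i
        = ee u - ∑ i ∈ u.filter (fun i => ¬ i < N), 2 ^ i := by
      rw [ee] at *; omega
    rw [heq]
    exact Nat.dvd_sub h hdvd2
  have hlt : ∑ i ∈ u.filter (fun i => i < N), 2 ^ i < 2 ^ N := by
    calc ∑ i ∈ u.filter (fun i => i < N), 2 ^ i
        ≤ ∑ i ∈ Finset.range N, 2 ^ i := by
          refine Finset.sum_le_sum_of_subset ?_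
          intro i hi
          simpa using (Finset.mem_filter.1 hi).2
      _ < 2 ^ N := two_pow_sum_lt N
  have hzero := Nat.eq_zero_of_dvd_of_lt hdvd1 hlt
  intro p hp
  by_contra hlt'
  have hpfil : p ∈ u.filter (fun i => i < N) := Finset.mem_filter.2 ⟨hp, by omega⟩
  have := Finset.sum_eq_zero_iff.1 hzero p hpfil
  simp at this

private lemma finset_sup_eq_union' (A B : Finset ℕ) : A ⊔ B = A ∪ B := rfl

private lemma sup_mem_of_closed {𝒮 : Set (Finset ℕ)}
    (hcl : ∀ A ∈ 𝒮, ∀ B ∈ 𝒮, A ∪ B ∈ 𝒮) {f : ℕ → Finset ℕ} {v : Finset ℕ}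
    (hv : v.Nonempty) : (∀ p ∈ v, f p ∈ 𝒮) → v.sup f ∈ 𝒮 := by
  induction hv using Finset.Nonempty.cons_induction with
  | singleton a =>
      intro hf
      simpa using hf a (Finset.mem_singleton_self a)
  | cons a s ha hs ih =>
      intro hf
      rw [Finset.sup_cons, finset_sup_eq_union']
      exact hcl _ (hf a (Finset.mem_cons_self a s)) _
        (ih fun p hp => hf p (Finset.mem_cons.2 (Or.inr hp)))

private lemma disjoint_sup_of {v w : Finset ℕ} {f : ℕ → Finset ℕ}
    (h : ∀ p ∈ v, ∀ q ∈ w, Disjoint (f p) (f q)) : Disjoint (v.sup f) (w.sup f) := by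
  rw [Finset.disjoint_left]
  intro a hav haw
  obtain ⟨p, hp, hap⟩ := Finset.mem_sup.1 hav
  obtain ⟨q, hq, haq⟩ := Finset.mem_sup.1 haw
  exact (Finset.disjoint_left.1 (h p hp q hq)) hap haq

private lemma exists_sum_dvd (b : Stream' ℕ) (m N : ℕ) :
    ∃ I : Finset ℕ, I.Nonempty ∧ (∀ i ∈ I, m ≤ i) ∧ 2 ^ N ∣ ∑ i ∈ I, b.get i := by
  classical
  have h2 : 0 < 2 ^ N := pow_pos (by norm_num) N
  have hinf : ∃ t, {i : ℕ | m ≤ i ∧ b.get i % 2 ^ N = t}.Infinite := by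
    by_contra hcon
    push_neg at hcon
    have hfin : {i : ℕ | m ≤ i}.Finite := by
      have hsub : {i : ℕ | m ≤ i} ⊆
          ⋃ t ∈ Finset.range (2 ^ N), {i : ℕ | m ≤ i ∧ b.get i % 2 ^ N = t} := by
        intro i hi
        exact Set.mem_biUnion (Finset.mem_range.2 (Nat.mod_lt _ h2)) ⟨hi, rfl⟩
      exact ((Finset.range (2 ^ N)).finite_toSet.biUnion
        (fun t _ => hcon t)).subset hsub
    have : {i : ℕ | m ≤ i} = Set.Ici m := rfl
    rw [this] at hfin
    exact Set.Ici_infinite m hfin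
  obtain ⟨t, ht⟩ := hinf
  obtain ⟨I, hIsub, hIcard⟩ := ht.exists_subset_card_eq (2 ^ N)
  refine ⟨I, ?_, ?_, ?_⟩
  · rw [← Finset.card_pos, hIcard]; exact h2
  · exact fun i hi => (hIsub (Finset.mem_coe.2 hi)).1
  · apply Nat.dvd_of_mod_eq_zero
    rw [Finset.sum_nat_mod]
    have hres : ∀ i ∈ I, b.get i % 2 ^ N = t := fun i hi => (hIsub (Finset.mem_coe.2 hi)).2
    rw [Finset.sum_congr rfl hres, Finset.sum_const, hIcard, smul_eq_mul, Nat.mul_mod_right]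

theorem full_match (r : ℕ) (𝒮 : Set (Finset ℕ)) (hS : IsIP 𝒮)
    (c : Finset ℕ → Fin r) :
    (∃ 𝒮' ⊆ 𝒮, IsIP 𝒮' ∧ ∃ i : Fin r, ∀ S ∈ NU 𝒮', c S = i) ∨
    (∃ ℬ : Finset (Finset ℕ), ↑ℬ ⊆ NU 𝒮 ∧
      ∃ 𝒯 ⊆ SMinus 𝒮 ↑ℬ, IsIP 𝒯 ∧
        ∀ T ∈ NU 𝒯, ∃ B ∈ ℬ, Disjoint B T ∧ c B = c T ∧ c T = c (B ∪ T)) := by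
  classical
  left
  obtain ⟨hclosed, 𝒟, h𝒟S, h𝒟inf, h𝒟pd⟩ := hS
  have hinf' : (𝒟 \ {∅}).Infinite := h𝒟inf.diff (Set.finite_singleton ∅)
  let emb := hinf'.natEmbedding
  let D : ℕ → Finset ℕ := fun j => ((emb j : ↥(𝒟 \ {∅})) : Finset ℕ)
  have hDmem𝒟 : ∀ j, D j ∈ 𝒟 \ {∅} := fun j => (emb j).2
  have hDmem : ∀ j, D j ∈ 𝒮 := fun j => h𝒟S (hDmem𝒟 j).1
  have hDne : ∀ j, (D j).Nonempty := fun j =>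
    Finset.nonempty_iff_ne_empty.2 (by simpa using (hDmem𝒟 j).2)
  have hDinj : Function.Injective D := fun j k h => emb.injective (Subtype.ext h)
  have hDdisj : ∀ j k, j ≠ k → Disjoint (D j) (D k) := fun j k hjk =>
    h𝒟pd (hDmem𝒟 j).1 (hDmem𝒟 k).1 (fun h => hjk (hDinj h))
  set a : Stream' ℕ := (fun n => 2 ^ n) with ha
  set κ : ℕ → Fin r := fun n => c ((n.bitIndices.toFinset).sup D) with hκ
  have hcov : Hindman.FS a ⊆ ⋃₀ (Set.range fun i : Fin r => {n | κ n = i} ∩ Hindman.FS a) :=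
    fun n hn => ⟨_, ⟨κ n, rfl⟩, rfl, hn⟩
  obtain ⟨C, ⟨i, rfl⟩, b, hb⟩ := Hindman.FS_partition_regular a _ (Set.finite_range _) hcov
  have step : ∀ m N : ℕ, ∃ Iu : Finset ℕ × Finset ℕ, Iu.1.Nonempty ∧ Iu.2.Nonempty ∧
      (∀ i' ∈ Iu.1, m ≤ i') ∧ (∀ p ∈ Iu.2, N ≤ p) ∧ (∑ i' ∈ Iu.1, b.get i') = ee Iu.2 := by
    intro m N
    obtain ⟨I, hne, hge, hdvd⟩ := exists_sum_dvd b m N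
    have hx : (∑ i' ∈ I, b.get i') ∈ Hindman.FS b := Hindman.FS.finset_sum b I hne
    have hxa : (∑ i' ∈ I, b.get i') ∈ Hindman.FS a := (hb hx).2
    obtain ⟨u, hune, _, hxe⟩ := fs_char a _ hxa 0 Stream'.drop_zero.symm
    exact ⟨(I, u), hne, hune, hge, dvd_pow_two_bound (hxe ▸ hdvd), hxe⟩
  set next : ℕ × ℕ → ℕ × ℕ := fun p =>
    (((step p.1 p.2).choose.1.sup id) + 1, ((step p.1 p.2).choose.2.sup id) + 1) with hnext
  set g : ℕ → ℕ × ℕ := fun j => next^[j] (0, 0) with hg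
  set I : ℕ → Finset ℕ := fun j => (step (g j).1 (g j).2).choose.1 with hI
  set u : ℕ → Finset ℕ := fun j => (step (g j).1 (g j).2).choose.2 with hu
  have spec : ∀ j, (I j).Nonempty ∧ (u j).Nonempty ∧ (∀ i' ∈ I j, (g j).1 ≤ i') ∧
      (∀ p ∈ u j, (g j).2 ≤ p) ∧ (∑ i' ∈ I j, b.get i') = ee (u j) :=
    fun j => (step (g j).1 (g j).2).choose_spec
  have hgsucc : ∀ j, g (j + 1) = ((I j).sup id + 1, (u j).sup id + 1) := by
    intro j
    show next^[j + 1] (0, 0) = _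
    rw [Function.iterate_succ_apply']
  have hIbound : ∀ j, ∀ i' ∈ I j, i' < (g (j + 1)).1 := by
    intro j i' hi'
    rw [hgsucc j]
    exact Nat.lt_succ_of_le (Finset.le_sup (f := id) hi')
  have hubound : ∀ j, ∀ p ∈ u j, p < (g (j + 1)).2 := by
    intro j p hp
    rw [hgsucc j]
    exact Nat.lt_succ_of_le (Finset.le_sup (f := id) hp)
  have hmono1 : StrictMono (fun j => (g j).1) := by
    apply strictMono_nat_of_lt_succ
    intro j
    obtain ⟨i', hi'⟩ := (spec j).1
    exact lt_of_le_of_lt ((spec j).2.2.1 i' hi') (hIbound j i' hi')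
  have hmono2 : StrictMono (fun j => (g j).2) := by
    apply strictMono_nat_of_lt_succ
    intro j
    obtain ⟨p, hp⟩ := (spec j).2.1
    exact lt_of_le_of_lt ((spec j).2.2.2.1 p hp) (hubound j p hp)
  have hIdisj' : ∀ j k, j < k → Disjoint (I j) (I k) := by
    intro j k hjk
    rw [Finset.disjoint_left]
    intro x hxj hxk
    have h1 : x < (g (j + 1)).1 := hIbound j x hxj
    have h2 : (g k).1 ≤ x := (spec k).2.2.1 x hxk
    have h3 : (g (j + 1)).1 ≤ (g k).1 := hmono1.monotone (Nat.succ_le_of_lt hjk)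
    omega
  have hudisj' : ∀ j k, j < k → Disjoint (u j) (u k) := by
    intro j k hjk
    rw [Finset.disjoint_left]
    intro x hxj hxk
    have h1 : x < (g (j + 1)).2 := hubound j x hxj
    have h2 : (g k).2 ≤ x := (spec k).2.2.2.1 x hxk
    have h3 : (g (j + 1)).2 ≤ (g k).2 := hmono2.monotone (Nat.succ_le_of_lt hjk)
    omega
  have hIdisj : ∀ j k, j ≠ k → Disjoint (I j) (I k) := by
    intro j k hjk
    rcases lt_or_gt_of_ne hjk with h | h
    · exact hIdisj' j k h
    · exact (hIdisj' k j h).symm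
  have hudisj : ∀ j k, j ≠ k → Disjoint (u j) (u k) := by
    intro j k hjk
    rcases lt_or_gt_of_ne hjk with h | h
    · exact hudisj' j k h
    · exact (hudisj' k j h).symm
  have hkey : ∀ J : Finset ℕ, J.Nonempty → ee (J.sup u) ∈ Hindman.FS b := by
    intro J hJ
    have hpd : (↑J : Set ℕ).PairwiseDisjoint u := fun j _ k _ hjk => hudisj j k hjk
    have hpdI : (↑J : Set ℕ).PairwiseDisjoint I := fun j _ k _ hjk => hIdisj j k hjk
    rw [Finset.sup_eq_biUnion]
    have h1 : ee (J.biUnion u) = ∑ j ∈ J, ee (u j) := by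
      simp only [ee]
      exact Finset.sum_biUnion hpd
    have h2 : ∑ j ∈ J, ee (u j) = ∑ i' ∈ J.biUnion I, b.get i' := by
      rw [Finset.sum_biUnion hpdI]
      exact (Finset.sum_congr rfl (fun j _ => (spec j).2.2.2.2)).symm
    rw [h1, h2]
    refine Hindman.FS.finset_sum b _ ?_
    obtain ⟨j, hj⟩ := hJ
    exact Finset.biUnion_nonempty.2 ⟨j, hj, (spec j).1⟩
  have hcol : ∀ J : Finset ℕ, J.Nonempty → c ((J.sup u).sup D) = i := by
    intro J hJ
    have h1 : κ (ee (J.sup u)) = i := (hb (hkey J hJ)).1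
    have h2 : c (((ee (J.sup u)).bitIndices.toFinset).sup D) = i := h1
    rw [decode_ee] at h2
    exact h2
  refine ⟨{X | ∃ J : Finset ℕ, J.Nonempty ∧ X = (J.sup u).sup D}, ?_, ⟨?_, ?_⟩, i, ?_⟩
  · rintro X ⟨J, hJ, rfl⟩
    have hvne : (J.sup u).Nonempty := by
      obtain ⟨j, hj⟩ := hJ
      obtain ⟨p, hp⟩ := (spec j).2.1
      exact ⟨p, Finset.mem_sup.2 ⟨j, hj, hp⟩⟩
    exact sup_mem_of_closed hclosed hvne (fun p _ => hDmem p)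
  · rintro X ⟨J, hJ, rfl⟩ Y ⟨J', hJ', rfl⟩
    refine ⟨J ∪ J', ?_, ?_⟩
    · obtain ⟨j, hj⟩ := hJ
      exact ⟨j, Finset.mem_union_left _ hj⟩
    · rw [Finset.sup_union, finset_sup_eq_union', Finset.sup_union, finset_sup_eq_union']
  · refine ⟨Set.range (fun j => (u j).sup D), ?_, ?_, ?_⟩
    · rintro X ⟨j, rfl⟩
      exact ⟨{j}, Finset.singleton_nonempty j, by rw [Finset.sup_singleton]⟩
    · apply Set.infinite_range_of_injective
      intro j k hjk
      by_contra hne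
      have hd : Disjoint ((u j).sup D) ((u k).sup D) := by
        apply disjoint_sup_of
        intro p hp q hq
        apply hDdisj
        rintro rfl
        exact (Finset.disjoint_left.1 (hudisj j k hne)) hp hq
      obtain ⟨p, hp⟩ := (spec j).2.1
      obtain ⟨x, hx⟩ := hDne p
      have hx1 : x ∈ (u j).sup D := Finset.mem_sup.2 ⟨p, hp, hx⟩
      have hjk' : (u j).sup D = (u k).sup D := hjk
      exact (Finset.disjoint_left.1 hd) hx1 (hjk' ▸ hx1)
    · rintro X ⟨j, rfl⟩ Y ⟨k, rfl⟩ hXY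
      have hjk : j ≠ k := by
        rintro rfl
        exact hXY rfl
      apply disjoint_sup_of
      intro p hp q hq
      apply hDdisj
      rintro rfl
      exact (Finset.disjoint_left.1 (hudisj j k hjk)) hp hq
  · rintro S ⟨hSne, F, hF, rfl⟩
    have hFne : F.Nonempty := by
      rcases Finset.eq_empty_or_nonempty F with rfl | h
      · simp only [Finset.sup_empty] at hSne
        exact absurd hSne (by simp)
      · exact h
    have hrep : ∀ (F : Finset (Finset ℕ)) (hne : F.Nonempty),
        (↑F ⊆ {X | ∃ J : Finset ℕ, J.Nonempty ∧ X = (J.sup u).sup D}) →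
        ∃ J : Finset ℕ, J.Nonempty ∧ F.sup id = (J.sup u).sup D := by
      intro F hne
      induction hne using Finset.Nonempty.cons_induction with
      | singleton X =>
          intro hsub
          obtain ⟨J, hJ, hX⟩ := hsub (Finset.mem_coe.2 (Finset.mem_singleton_self X))
          exact ⟨J, hJ, by simpa using hX⟩
      | cons X F' hX hne ih =>
          intro hsub
          obtain ⟨J1, hJ1, hX1⟩ := hsub (Finset.mem_coe.2 (Finset.mem_cons_self X F'))
          obtain ⟨J2, hJ2, hX2⟩ :=
            ih (fun Y hY => hsub (Finset.mem_coe.2 (Finset.mem_cons.2 (Or.inr hY))))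
          refine ⟨J1 ∪ J2, ?_, ?_⟩
          · obtain ⟨j, hj⟩ := hJ1
            exact ⟨j, Finset.mem_union_left _ hj⟩
          · rw [Finset.sup_cons]
            have e1 : (J1 ∪ J2).sup u = J1.sup u ∪ J2.sup u := by
              rw [Finset.sup_union]; rfl
            have e2 : (J1.sup u ∪ J2.sup u).sup D = (J1.sup u).sup D ∪ (J2.sup u).sup D := by
              rw [Finset.sup_union]; rfl
            rw [e1, e2, ← hX1, ← hX2]
            rfl
    obtain ⟨J, hJ, hrepr⟩ := hrep F hFne hF
    rw [hrepr]
    exact hcol J hJ
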